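/- Let A and B be finite subsets of ℤⁿ and let Ā = A + [0,1]ⁿ and B̄ = B + [0,1]ⁿ (Minkowski sums in ℝⁿ, identifying ℤⁿ with the integer lattice in ℝⁿ). Then g_{Ā} = g_{B̄} if and only if |A ∩ (A + z)| = |B ∩ (B + z)| for every z ∈ ℤⁿ. -/

import Mathlib

open MeasureTheory Topology Filter Set Pointwise

/-- The covariogram of a set `A ⊆ ℝⁿ`: `g_A(x) = λₙ(A ∩ (A + x))`. -/
noncomputable def covariogram {n : ℕ} (A : Set (EuclideanSpace ℝ (Fin n)))
    (x : EuclideanSpace ℝ (Fin n)) : ℝ :=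
  (volume (A ∩ ((· + x) '' A))).toReal

/-- The embedding of the integer lattice `ℤⁿ` into `ℝⁿ`. -/
def latticeEmbed {n : ℕ} (z : Fin n → ℤ) : EuclideanSpace ℝ (Fin n) :=
  WithLp.toLp 2 (fun i => (z i : ℝ))

/-- The unit cube `[0,1]ⁿ ⊆ ℝⁿ`. -/
def unitCube (n : ℕ) : Set (EuclideanSpace ℝ (Fin n)) :=
  {x | ∀ i, x i ∈ Set.Icc (0 : ℝ) 1}

section Aux

variable {n : ℕ}


def box (lo hi : Fin n → ℝ) : Set (EuclideanSpace ℝ (Fin n)) :=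
  {y | ∀ i, y i ∈ Set.Icc (lo i) (hi i)}

lemma box_eq_pi (lo hi : Fin n → ℝ) :
    box lo hi = WithLp.ofLp ⁻¹' Set.pi Set.univ (fun i => Set.Icc (lo i) (hi i)) := by
  ext y
  exact ⟨fun h => fun i _ => h i, fun h i => h i (Set.mem_univ i)⟩

lemma measurableSet_box (lo hi : Fin n → ℝ) : MeasurableSet (box lo hi) := by
  rw [box_eq_pi]
  exact (PiLp.volume_preserving_ofLp (Fin n)).measurable (MeasurableSet.univ_pi fun i => measurableSet_Icc :
    MeasurableSet (Set.pi Set.univ (fun i => Set.Icc (lo i) (hi i)) : Set (Fin n → ℝ)))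

lemma volume_box (lo hi : Fin n → ℝ) :
    volume (box lo hi) = ∏ i, ENNReal.ofReal (hi i - lo i) := by
  have h := EuclideanSpace.volume_preserving_symm_measurableEquiv_toLp (Fin n)
  have hm : MeasurableSet (Set.pi Set.univ (fun i => Set.Icc (lo i) (hi i)) : Set (Fin n → ℝ)) :=
    MeasurableSet.univ_pi fun i => measurableSet_Icc
  have := h.measure_preimage hm.nullMeasurableSet
  rw [box_eq_pi]
  have hpre : (MeasurableEquiv.toLp 2 (Fin n → ℝ)).symm ⁻¹'
      (Set.pi Set.univ (fun i => Set.Icc (lo i) (hi i))) =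
      (WithLp.ofLp ⁻¹' Set.pi Set.univ (fun i => Set.Icc (lo i) (hi i)) : Set (EuclideanSpace ℝ (Fin n))) := rfl
  rw [hpre] at this
  rw [this, volume_pi_pi]
  simp [Real.volume_Icc]

lemma box_inter (lo hi lo' hi' : Fin n → ℝ) :
    box lo hi ∩ box lo' hi'
      = box (fun i => max (lo i) (lo' i)) (fun i => min (hi i) (hi' i)) := by
  ext y
  simp only [box, Set.mem_inter_iff, Set.mem_setOf_eq, Set.mem_Icc, max_le_iff, le_min_iff,
    ← forall_and]
  exact forall_congr' fun i => by tauto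

open Pointwise in
lemma box_image_add (lo hi : Fin n → ℝ) (x : EuclideanSpace ℝ (Fin n)) :
    (· + x) '' box lo hi = box (fun i => lo i + x i) (fun i => hi i + x i) := by
  ext y
  constructor
  · rintro ⟨w, hw, rfl⟩
    intro i
    have := hw i
    simp only [Set.mem_Icc] at this ⊢
    show lo i + x i ≤ w i + x i ∧ w i + x i ≤ hi i + x i
    constructor <;> linarith [this.1, this.2]
  · intro hy
    refine ⟨y - x, fun i => ?_, sub_add_cancel y x⟩
    have := hy i
    simp only [Set.mem_Icc] at this ⊢
    have h1 : (y - x) i = y i - x i := rfl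
    rw [h1]
    constructor <;> linarith [this.1, this.2]

open Pointwise in
lemma animal_eq (A : Finset (Fin n → ℤ)) :
    latticeEmbed '' ↑A + unitCube n
      = ⋃ a ∈ A, box (latticeEmbed a) (fun i => (a i : ℝ) + 1) := by
  ext y
  simp only [Set.mem_add, Set.mem_image, Set.mem_iUnion, exists_prop]
  constructor
  · rintro ⟨-, ⟨a, ha, rfl⟩, c, hc, rfl⟩
    refine ⟨a, ha, fun i => ?_⟩
    have := hc i
    simp only [Set.mem_Icc] at this ⊢
    show (a i : ℝ) ≤ latticeEmbed a i + c i ∧ latticeEmbed a i + c i ≤ (a i : ℝ) + 1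
    simp only [latticeEmbed]
    constructor <;> linarith [this.1, this.2]
  · rintro ⟨a, ha, hy⟩
    refine ⟨latticeEmbed a, ⟨a, ha, rfl⟩, y - latticeEmbed a, fun i => ?_, add_sub_cancel (latticeEmbed a) y⟩
    have := hy i
    simp only [Set.mem_Icc] at this ⊢
    have h1 : (y - latticeEmbed a) i = y i - (a i : ℝ) := rfl
    rw [h1]
    simp only [latticeEmbed] at this
    constructor <;> linarith [this.1, this.2]

lemma volume_unitbox_inter (u w : Fin n → ℝ) :
    volume (box u (fun i => u i + 1) ∩ box w (fun i => w i + 1))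
      = ∏ i, ENNReal.ofReal (1 - |u i - w i|) := by
  rw [box_inter, volume_box]
  refine Finset.prod_congr rfl fun i _ => ?_
  congr 1
  rcases le_total (u i) (w i) with h | h
  · rw [abs_of_nonpos (by linarith), max_eq_right h, min_eq_left (by linarith)]
    ring
  · rw [abs_of_nonneg (by linarith), max_eq_left h, min_eq_right (by linarith)]
    ring

lemma volume_intbox_inter_eq_zero (a b : Fin n → ℤ) (v : Fin n → ℝ) (h : a ≠ b) :
    volume (box (fun i => (a i : ℝ) + v i) (fun i => ((a i : ℝ) + v i) + 1)
      ∩ box (fun i => (b i : ℝ) + v i) (fun i => ((b i : ℝ) + v i) + 1)) = 0 := by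
  rw [volume_unitbox_inter]
  obtain ⟨i, hi⟩ := Function.ne_iff.mp h
  refine Finset.prod_eq_zero (Finset.mem_univ i) ?_
  rw [ENNReal.ofReal_eq_zero]
  have h1 : (1 : ℤ) ≤ |a i - b i| := Int.one_le_abs (sub_ne_zero.mpr hi)
  have h2 : (1 : ℝ) ≤ |(a i : ℝ) + v i - ((b i : ℝ) + v i)| := by
    have : (a i : ℝ) + v i - ((b i : ℝ) + v i) = ((a i - b i : ℤ) : ℝ) := by push_cast; ring
    rw [this, ← Int.cast_abs]
    exact_mod_cast h1
  linarith

lemma volume_unitbox_inter_zero (u w : Fin n → ℝ) (i : Fin n) (h : 1 ≤ |u i - w i|) :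
    volume (box u (fun i => u i + 1) ∩ box w (fun i => w i + 1)) = 0 := by
  rw [volume_unitbox_inter]
  refine Finset.prod_eq_zero (Finset.mem_univ i) ?_
  rw [ENNReal.ofReal_eq_zero]
  linarith

lemma one_le_abs_int_cast {a b : ℤ} (h : a ≠ b) : (1 : ℝ) ≤ |(a : ℝ) - (b : ℝ)| := by
  have h1 : (1 : ℤ) ≤ |a - b| := Int.one_le_abs (sub_ne_zero.mpr h)
  have : (a : ℝ) - (b : ℝ) = ((a - b : ℤ) : ℝ) := by push_cast; ring
  rw [this, ← Int.cast_abs]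
  exact_mod_cast h1

lemma box_congr {lo lo' hi hi' : Fin n → ℝ} (h1 : ∀ i, lo i = lo' i) (h2 : ∀ i, hi i = hi' i) :
    box lo hi = box lo' hi' := by
  have e1 : lo = lo' := funext h1
  have e2 : hi = hi' := funext h2
  rw [e1, e2]

open Pointwise in
lemma animal_inter_eq (A : Finset (Fin n → ℤ)) (x : EuclideanSpace ℝ (Fin n)) :
    (latticeEmbed '' ↑A + unitCube n) ∩ ((· + x) '' (latticeEmbed '' ↑A + unitCube n))
      = ⋃ p ∈ A ×ˢ A, (box (fun i => (p.1 i : ℝ)) (fun i => (p.1 i : ℝ) + 1)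
          ∩ box (fun i => (p.2 i : ℝ) + x i) (fun i => ((p.2 i : ℝ) + x i) + 1)) := by
  have himg : (· + x) '' (latticeEmbed '' ↑A + unitCube n)
      = ⋃ b ∈ A, box (fun i => (b i : ℝ) + x i) (fun i => ((b i : ℝ) + x i) + 1) := by
    rw [animal_eq, Set.image_iUnion₂]
    refine Set.iUnion₂_congr fun b _ => ?_
    rw [box_image_add]
    refine box_congr (fun i => by simp [latticeEmbed]) (fun i => by ring)
  have hbox : ∀ a : Fin n → ℤ, box (latticeEmbed a) (fun i => (a i : ℝ) + 1)
      = box (fun i => (a i : ℝ)) (fun i => (a i : ℝ) + 1) := fun a => rfl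
  rw [himg, animal_eq]
  ext y
  simp only [Set.mem_inter_iff, Set.mem_iUnion, exists_prop, Finset.mem_product]
  constructor
  · rintro ⟨⟨a, ha, hya⟩, ⟨b, hb, hyb⟩⟩
    exact ⟨(a, b), ⟨ha, hb⟩, (hbox a ▸ hya), hyb⟩
  · rintro ⟨p, ⟨h1, h2⟩, hy1, hy2⟩
    exact ⟨⟨p.1, h1, (hbox p.1).symm ▸ hy1⟩, ⟨p.2, h2, hy2⟩⟩

open Pointwise in
lemma volume_animal_inter (A : Finset (Fin n → ℤ)) (x : EuclideanSpace ℝ (Fin n)) :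
    volume ((latticeEmbed '' ↑A + unitCube n) ∩ ((· + x) '' (latticeEmbed '' ↑A + unitCube n)))
      = ∑ p ∈ A ×ˢ A, ∏ i, ENNReal.ofReal (1 - |(p.1 i : ℝ) - ((p.2 i : ℝ) + x i)|) := by
  rw [animal_inter_eq]
  rw [measure_biUnion_finset₀ ?hdisj ?hmeas]
  case hmeas =>
    exact fun p _ => ((measurableSet_box _ _).inter (measurableSet_box _ _)).nullMeasurableSet
  case hdisj =>
    intro p hp q hq hpq
    have hne : ¬(p.1 = q.1 ∧ p.2 = q.2) := fun h => hpq (Prod.ext_iff.mpr h)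
    rcases not_and_or.mp hne with h1 | h2
    · obtain ⟨i, hi⟩ := Function.ne_iff.mp h1
      refine measure_mono_null (Set.inter_subset_inter Set.inter_subset_left Set.inter_subset_left) ?_
      exact volume_unitbox_inter_zero _ _ i (one_le_abs_int_cast hi)
    · obtain ⟨i, hi⟩ := Function.ne_iff.mp h2
      refine measure_mono_null (Set.inter_subset_inter Set.inter_subset_right Set.inter_subset_right) ?_
      refine volume_unitbox_inter_zero _ _ i ?_
      have := one_le_abs_int_cast hi
      calc (1:ℝ) ≤ |(p.2 i : ℝ) - (q.2 i : ℝ)| := this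
        _ = |((p.2 i : ℝ) + x i) - ((q.2 i : ℝ) + x i)| := by ring_nf
  refine Finset.sum_congr rfl fun p _ => ?_
  rw [volume_unitbox_inter]

lemma ofReal_eq_ofReal_max (a : ℝ) : ENNReal.ofReal a = ENNReal.ofReal (max 0 a) := by
  rcases le_total a 0 with h | h
  · rw [max_eq_left h, ENNReal.ofReal_eq_zero.mpr h, ENNReal.ofReal_zero]
  · rw [max_eq_right h]

open Pointwise in
lemma covariogram_animal (A : Finset (Fin n → ℤ)) (x : EuclideanSpace ℝ (Fin n)) :
    covariogram (latticeEmbed '' ↑A + unitCube n) x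
      = ∑ p ∈ A ×ˢ A, ∏ i, max 0 (1 - |(p.1 i : ℝ) - ((p.2 i : ℝ) + x i)|) := by
  rw [covariogram, volume_animal_inter]
  have hterm : ∀ p : (Fin n → ℤ) × (Fin n → ℤ),
      (∏ i, ENNReal.ofReal (1 - |(p.1 i : ℝ) - ((p.2 i : ℝ) + x i)|))
        = ENNReal.ofReal (∏ i, max 0 (1 - |(p.1 i : ℝ) - ((p.2 i : ℝ) + x i)|)) := by
    intro p
    rw [ENNReal.ofReal_prod_of_nonneg (fun i _ => le_max_left 0 _)]
    exact Finset.prod_congr rfl fun i _ => ofReal_eq_ofReal_max _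
  rw [ENNReal.toReal_sum (fun p _ => by rw [hterm]; exact ENNReal.ofReal_ne_top)]
  refine Finset.sum_congr rfl fun p _ => ?_
  rw [hterm, ENNReal.toReal_ofReal (Finset.prod_nonneg fun i _ => le_max_left 0 _)]

lemma count_eq (A : Finset (Fin n → ℤ)) (z : Fin n → ℤ) :
    ((A ×ˢ A).filter (fun p => p.1 - p.2 = z)).card = (A ∩ A.image (· + z)).card := by
  classical
  have h1 : A ∩ A.image (· + z) = A.filter (fun a => a - z ∈ A) := by
    ext a
    simp only [Finset.mem_inter, Finset.mem_image, Finset.mem_filter]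
    constructor
    · rintro ⟨ha, b, hb, rfl⟩
      exact ⟨ha, by simpa using hb⟩
    · rintro ⟨ha, h⟩
      exact ⟨ha, a - z, h, by abel⟩
  rw [h1]
  refine Finset.card_bij (fun p _ => p.1) ?_ ?_ ?_
  · intro p hp
    rw [Finset.mem_filter] at hp ⊢
    rw [Finset.mem_product] at hp
    obtain ⟨⟨h1', h2'⟩, h3⟩ := hp
    exact ⟨h1', by rw [show p.1 - z = p.2 from by rw [← h3]; abel]; exact h2'⟩
  · intro p hp q hq hpq
    rw [Finset.mem_filter, Finset.mem_product] at hp hq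
    have : p.2 = q.2 := by
      have e1 : p.2 = p.1 - z := by rw [← hp.2]; abel
      have e2 : q.2 = q.1 - z := by rw [← hq.2]; abel
      rw [e1, e2, hpq]
    exact Prod.ext_iff.mpr ⟨hpq, this⟩
  · intro a ha
    rw [Finset.mem_filter] at ha
    refine ⟨(a, a - z), ?_, rfl⟩
    rw [Finset.mem_filter, Finset.mem_product]
    refine ⟨⟨ha.1, ha.2⟩, ?_⟩
    show a - (a - z) = z
    abel

lemma tent_int (a b z : Fin n → ℤ) :
    (∏ i, max 0 (1 - |(a i : ℝ) - ((b i : ℝ) + latticeEmbed z i)|))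
      = if a - b = z then (1 : ℝ) else 0 := by
  by_cases h : a - b = z
  · rw [if_pos h]
    refine Finset.prod_eq_one fun i _ => ?_
    have h1 : a i - b i = z i := by rw [← h]; rfl
    have h2 : (a i : ℝ) - ((b i : ℝ) + latticeEmbed z i) = 0 := by
      simp only [latticeEmbed]
      have := congrArg (Int.cast : ℤ → ℝ) h1
      push_cast at this
      linarith
    rw [h2, abs_zero]
    norm_num
  · rw [if_neg h]
    obtain ⟨i, hi⟩ := Function.ne_iff.mp h
    refine Finset.prod_eq_zero (Finset.mem_univ i) ?_
    have h1 : a i - b i ≠ z i := fun hc => hi hc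
    have h2 := one_le_abs_int_cast h1
    push_cast at h2
    have e : (a i : ℝ) - ((b i : ℝ) + latticeEmbed z i) = ((a i : ℝ) - (b i : ℝ)) - (z i : ℝ) := by
      simp only [latticeEmbed]; ring
    rw [e, max_eq_left (by linarith)]

lemma sum_tent_eq (A : Finset (Fin n → ℤ)) (D : Finset (Fin n → ℤ))
    (hD : ∀ p ∈ A ×ˢ A, p.1 - p.2 ∈ D) (x : EuclideanSpace ℝ (Fin n)) :
    (∑ p ∈ A ×ˢ A, ∏ i, max 0 (1 - |(p.1 i : ℝ) - ((p.2 i : ℝ) + x i)|))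
      = ∑ z ∈ D, ((A ∩ A.image (· + z)).card : ℝ) * ∏ i, max 0 (1 - |(z i : ℝ) - x i|) := by
  classical
  rw [← Finset.sum_fiberwise_of_maps_to hD
    (fun p => ∏ i, max 0 (1 - |(p.1 i : ℝ) - ((p.2 i : ℝ) + x i)|))]
  refine Finset.sum_congr rfl fun z hz => ?_
  have hc : ∀ p ∈ (A ×ˢ A).filter (fun p => p.1 - p.2 = z),
      (∏ i, max 0 (1 - |(p.1 i : ℝ) - ((p.2 i : ℝ) + x i)|))
        = ∏ i, max 0 (1 - |(z i : ℝ) - x i|) := by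
    intro p hp
    rw [Finset.mem_filter] at hp
    refine Finset.prod_congr rfl fun i _ => ?_
    have h1 : p.1 i - p.2 i = z i := by rw [← hp.2]; rfl
    have h2 : (p.1 i : ℝ) - ((p.2 i : ℝ) + x i) = (z i : ℝ) - x i := by
      have := congrArg (Int.cast : ℤ → ℝ) h1
      push_cast at this
      linarith
    rw [h2]
  rw [Finset.sum_congr rfl hc, Finset.sum_const, ← count_eq, nsmul_eq_mul]


end Aux

/-- The animals `Ā = A + [0,1]ⁿ` and `B̄ = B + [0,1]ⁿ` of finite sets `A, B ⊆ ℤⁿ` have equal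
covariograms if and only if `A` and `B` are homometric. -/
theorem covariogram_animal_eq_iff_homometric {n : ℕ} (A B : Finset (Fin n → ℤ)) :
    covariogram (latticeEmbed '' ↑A + unitCube n) =
      covariogram (latticeEmbed '' ↑B + unitCube n) ↔
    ∀ z : Fin n → ℤ, (A ∩ A.image (· + z)).card = (B ∩ B.image (· + z)).card := by
  classical
  constructor
  · intro h z
    have h1 := congrFun h (latticeEmbed z)
    rw [covariogram_animal, covariogram_animal] at h1
    have eA : (∑ p ∈ A ×ˢ A, ∏ i, max 0 (1 - |(p.1 i : ℝ) - ((p.2 i : ℝ) + latticeEmbed z i)|))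
        = ((A ∩ A.image (· + z)).card : ℝ) := by
      rw [Finset.sum_congr rfl (fun p _ => tent_int p.1 p.2 z), Finset.sum_boole, count_eq]
    have eB : (∑ p ∈ B ×ˢ B, ∏ i, max 0 (1 - |(p.1 i : ℝ) - ((p.2 i : ℝ) + latticeEmbed z i)|))
        = ((B ∩ B.image (· + z)).card : ℝ) := by
      rw [Finset.sum_congr rfl (fun p _ => tent_int p.1 p.2 z), Finset.sum_boole, count_eq]
    rw [eA, eB] at h1
    exact_mod_cast h1
  · intro h
    funext x
    rw [covariogram_animal, covariogram_animal]
    set D := Finset.image (fun p : (Fin n → ℤ) × (Fin n → ℤ) => p.1 - p.2) (A ×ˢ A)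
        ∪ Finset.image (fun p : (Fin n → ℤ) × (Fin n → ℤ) => p.1 - p.2) (B ×ˢ B) with hDdef
    rw [sum_tent_eq A D (fun p hp => Finset.mem_union_left _ (Finset.mem_image_of_mem _ hp)) x,
        sum_tent_eq B D (fun p hp => Finset.mem_union_right _ (Finset.mem_image_of_mem _ hp)) x]
    exact Finset.sum_congr rfl fun z _ => by rw [h z]
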